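/- Let N ≥ 4 and m ∈ ℕ. Define the differential operators on functions of x ∈ [0,1]: (Δ_[0] y)(x) = x y''(x) + (5/2) y'(x), and (Δ_[1] y)(x) = (1-x) y''(x) - (N/2) y'(x) (i.e. Δ_[1] = z d²/dz² + (N/2) d/dz in the variable z = 1-x). Then there exists a constant C > 0 such that for every y ∈ C^∞([0,1]) whose support is contained in [1/6, 5/6], one has ‖Δ_[0]^m y‖_{L^∞([0,1])} ≤ C Σ_{k=0}^{m} ‖Δ_[1]^k y‖_{L^∞([0,1])}. -/

import Mathlib

open Real Set Filter Topology

/-- The model degenerate operator at `x = 0`: `Δ_[0] y = x y'' + (5/2) y'`. -/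
noncomputable def Delta0 (y : ℝ → ℝ) : ℝ → ℝ := fun x =>
  x * deriv (deriv y) x + (5/2) * deriv y x

/-- The model degenerate operator at `x = 1`: `Δ_[1] y = (1-x) y'' - (N/2) y'`
(that is, `z y'' + (N/2) y'` in the variable `z = 1 - x`). -/
noncomputable def Delta1 (N : ℝ) (y : ℝ → ℝ) : ℝ → ℝ := fun x =>
  (1-x) * deriv (deriv y) x - (N/2) * deriv y x

namespace Prop7Aux

/-- The sup-norm over `[0,1]`. -/
noncomputable def S (f : ℝ → ℝ) : ℝ := ⨆ x : Icc (0:ℝ) 1, |f x|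

lemma bddS {f : ℝ → ℝ} (hf : Continuous f) :
    BddAbove (Set.range fun x : Icc (0:ℝ) 1 => |f x|) := by
  obtain ⟨C, hC⟩ := (isCompact_Icc.image_of_continuousOn
    (hf.abs.continuousOn (s := Icc (0:ℝ) 1))).bddAbove
  refine ⟨C, ?_⟩
  rintro _ ⟨x, rfl⟩
  exact hC ⟨↑x, x.2, rfl⟩

lemma le_S {f : ℝ → ℝ} (hf : Continuous f) {x : ℝ} (hx : x ∈ Icc (0:ℝ) 1) : |f x| ≤ S f :=
  le_ciSup (bddS hf) (⟨x, hx⟩ : Icc (0:ℝ) 1)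

lemma S_nonneg {f : ℝ → ℝ} (hf : Continuous f) : 0 ≤ S f :=
  (abs_nonneg (f 0)).trans (le_S hf (by constructor <;> norm_num))

lemma ddiff {f : ℝ → ℝ} (h : ContDiff ℝ (⊤:ℕ∞) f) : Differentiable ℝ f :=
  h.differentiable (by simp)

lemma sderiv {f : ℝ → ℝ} (h : ContDiff ℝ (⊤:ℕ∞) f) : ContDiff ℝ (⊤:ℕ∞) (deriv f) :=
  (contDiff_infty_iff_deriv.mp h).2

lemma smooth_iterD {f : ℝ → ℝ} (h : ContDiff ℝ (⊤:ℕ∞) f) (n : ℕ) :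
    ContDiff ℝ (⊤:ℕ∞) (iteratedDeriv n f) := by
  rw [iteratedDeriv_eq_iterate]
  exact ContDiff.iterate_deriv n h

lemma hD {f : ℝ → ℝ} (h : ContDiff ℝ (⊤:ℕ∞) f) (n : ℕ) (x : ℝ) :
    HasDerivAt (iteratedDeriv n f) (iteratedDeriv (n+1) f x) x := by
  rw [iteratedDeriv_succ]
  exact (ddiff (smooth_iterD h n) x).hasDerivAt

lemma smooth_Delta1 (N : ℝ) {f : ℝ → ℝ} (h : ContDiff ℝ (⊤:ℕ∞) f) :
    ContDiff ℝ (⊤:ℕ∞) (Delta1 N f) := by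
  unfold Delta1
  exact ((contDiff_const.sub contDiff_id).mul (sderiv (sderiv h))).sub
    (contDiff_const.mul (sderiv h))

lemma smooth_Delta0 {f : ℝ → ℝ} (h : ContDiff ℝ (⊤:ℕ∞) f) :
    ContDiff ℝ (⊤:ℕ∞) (Delta0 f) := by
  unfold Delta0
  exact (contDiff_id.mul (sderiv (sderiv h))).add (contDiff_const.mul (sderiv h))

lemma smooth_iter1 (N : ℝ) (k : ℕ) {f : ℝ → ℝ} (h : ContDiff ℝ (⊤:ℕ∞) f) :
    ContDiff ℝ (⊤:ℕ∞) ((Delta1 N)^[k] f) := by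
  induction k with
  | zero => simpa using h
  | succ i ih => rw [Function.iterate_succ_apply']; exact smooth_Delta1 N ih

lemma smooth_iter0 (k : ℕ) {f : ℝ → ℝ} (h : ContDiff ℝ (⊤:ℕ∞) f) :
    ContDiff ℝ (⊤:ℕ∞) (Delta0^[k] f) := by
  induction k with
  | zero => simpa using h
  | succ i ih => rw [Function.iterate_succ_apply']; exact smooth_Delta0 ih

lemma tsupp_deriv (f : ℝ → ℝ) : tsupport (deriv f) ⊆ tsupport f :=
  closure_minimal support_deriv_subset (isClosed_tsupport f)

lemma tsupp_iterDeriv (n : ℕ) (f : ℝ → ℝ) : tsupport (iteratedDeriv n f) ⊆ tsupport f := by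
  induction n generalizing f with
  | zero => rw [iteratedDeriv_zero]
  | succ i ih => rw [iteratedDeriv_succ']; exact (ih (deriv f)).trans (tsupp_deriv f)

lemma tsupp_Delta1 (N : ℝ) (f : ℝ → ℝ) : tsupport (Delta1 N f) ⊆ tsupport f := by
  apply closure_minimal _ (isClosed_tsupport f)
  intro x hx
  rw [Function.mem_support] at hx
  by_contra hxf
  have h1 : deriv f x = 0 := image_eq_zero_of_notMem_tsupport fun h => hxf (tsupp_deriv f h)
  have h2 : deriv (deriv f) x = 0 :=
    image_eq_zero_of_notMem_tsupport fun h => hxf (tsupp_deriv f (tsupp_deriv (deriv f) h))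
  exact hx (by simp [Delta1, h1, h2])

lemma tsupp_Delta0 (f : ℝ → ℝ) : tsupport (Delta0 f) ⊆ tsupport f := by
  apply closure_minimal _ (isClosed_tsupport f)
  intro x hx
  rw [Function.mem_support] at hx
  by_contra hxf
  have h1 : deriv f x = 0 := image_eq_zero_of_notMem_tsupport fun h => hxf (tsupp_deriv f h)
  have h2 : deriv (deriv f) x = 0 :=
    image_eq_zero_of_notMem_tsupport fun h => hxf (tsupp_deriv f (tsupp_deriv (deriv f) h))
  exact hx (by simp [Delta0, h1, h2])

lemma tsupp_iter1 (N : ℝ) (k : ℕ) (f : ℝ → ℝ) :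
    tsupport ((Delta1 N)^[k] f) ⊆ tsupport f := by
  induction k with
  | zero => simp
  | succ i ih =>
    rw [Function.iterate_succ_apply']
    exact (tsupp_Delta1 N _).trans ih

lemma tsupp_iter0 (k : ℕ) (f : ℝ → ℝ) :
    tsupport (Delta0^[k] f) ⊆ tsupport f := by
  induction k with
  | zero => simp
  | succ i ih =>
    rw [Function.iterate_succ_apply']
    exact (tsupp_Delta0 _).trans ih

lemma iterc {n m : ℕ} (h : n = m) (f : ℝ → ℝ) :
    iteratedDeriv n f = iteratedDeriv m f := by rw [h]

/-- iterated derivative of `f + c•g`. -/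
lemma iter_comb (c : ℝ) {f g : ℝ → ℝ} (hf : ContDiff ℝ (⊤:ℕ∞) f)
    (hg : ContDiff ℝ (⊤:ℕ∞) g) (n : ℕ) :
    iteratedDeriv n (fun x => f x + c * g x)
      = fun x => iteratedDeriv n f x + c * iteratedDeriv n g x := by
  induction n with
  | zero => funext x; simp
  | succ i ih =>
    funext x
    rw [iteratedDeriv_succ, ih]
    exact ((hD hf i x).add ((hD hg i x).const_mul c)).deriv

/-- Leibniz rule for a linear coefficient. -/
lemma iter_linear (a b : ℝ) {f : ℝ → ℝ} (hf : ContDiff ℝ (⊤:ℕ∞) f) (j : ℕ) :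
    iteratedDeriv (j+1) (fun x => (a + b*x) * f x)
      = fun x => (a + b*x) * iteratedDeriv (j+1) f x + ((j:ℝ)+1) * b * iteratedDeriv j f x := by
  induction j with
  | zero =>
    funext x
    have h1 : HasDerivAt (fun x : ℝ => a + b * x) b x := by
      simpa using ((hasDerivAt_id x).const_mul b).const_add a
    have h2 : HasDerivAt f (iteratedDeriv 1 f x) x := by
      rw [iteratedDeriv_one]
      exact (ddiff hf x).hasDerivAt
    rw [iteratedDeriv_one, HasDerivAt.deriv (f := fun x => (a + b * x) * f x) (h1.mul h2), iteratedDeriv_one, iteratedDeriv_zero]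
    push_cast
    ring
  | succ i ih =>
    funext x
    have h1 : HasDerivAt (fun x : ℝ => a + b * x) b x := by
      simpa using ((hasDerivAt_id x).const_mul b).const_add a
    rw [iteratedDeriv_succ, ih]
    have hval : HasDerivAt
        (fun x => (a + b*x) * iteratedDeriv (i+1) f x + ((i:ℝ)+1) * b * iteratedDeriv i f x)
        ((b * iteratedDeriv (i+1) f x + (a + b*x) * iteratedDeriv (i+1+1) f x)
          + ((i:ℝ)+1) * b * iteratedDeriv (i+1) f x) x :=
      (h1.mul (hD hf (i+1) x)).add ((hD hf i x).const_mul (((i:ℝ)+1) * b))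
    rw [hval.deriv]
    push_cast
    ring

/-- Key identity relating iterated derivatives to `Delta1`. -/
lemma key_id1 (N : ℝ) {w : ℝ → ℝ} (hw : ContDiff ℝ (⊤:ℕ∞) w) (j : ℕ) (x : ℝ) :
    (1-x) * iteratedDeriv (j+2) w x
      = iteratedDeriv j (Delta1 N w) x + (N/2 + j) * iteratedDeriv (j+1) w x := by
  have h2 : ContDiff ℝ (⊤:ℕ∞) (deriv (deriv w)) := sderiv (sderiv hw)
  cases j with
  | zero =>
    have e2 : iteratedDeriv (0+2) w = deriv (deriv w) := by
      rw [iterc (show 0+2 = 1+1 by omega) w, iteratedDeriv_succ, iteratedDeriv_one]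
    have e1 : iteratedDeriv (0+1) w = deriv w := by
      rw [iterc (show 0+1 = 1 by omega) w, iteratedDeriv_one]
    rw [e2, e1, iteratedDeriv_zero]
    simp only [Delta1]
    push_cast
    ring
  | succ i =>
    have heq : (fun x : ℝ => (1 + (-1)*x) * deriv (deriv w) x)
        = fun x => Delta1 N w x + (N/2) * deriv w x := by
      funext t; simp only [Delta1]; ring
    have h1 := iter_linear 1 (-1) h2 i
    rw [heq] at h1
    have h3 := iter_comb (N/2) (smooth_Delta1 N hw) (sderiv hw) (i+1)
    have eA : iteratedDeriv (i+1) (deriv (deriv w)) = iteratedDeriv (i+1+2) w := by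
      rw [← iteratedDeriv_succ', ← iteratedDeriv_succ']
    have eB : iteratedDeriv i (deriv (deriv w)) = iteratedDeriv (i+1+1) w := by
      rw [← iteratedDeriv_succ', ← iteratedDeriv_succ']
    have eC : iteratedDeriv (i+1) (deriv w) = iteratedDeriv (i+1+1) w := by
      rw [← iteratedDeriv_succ']
    rw [eA, eB] at h1
    rw [eC] at h3
    have H1 := congrFun h1 x
    have H3 := congrFun h3 x
    have Hc := H3.symm.trans H1
    push_cast at Hc ⊢
    linarith [Hc]

/-- Key identity relating iterated derivatives of `Delta0 w` to those of `w`. -/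
lemma key_id0 {w : ℝ → ℝ} (hw : ContDiff ℝ (⊤:ℕ∞) w) (j : ℕ) (x : ℝ) :
    iteratedDeriv j (Delta0 w) x
      = x * iteratedDeriv (j+2) w x + (5/2 + j) * iteratedDeriv (j+1) w x := by
  have h2 : ContDiff ℝ (⊤:ℕ∞) (deriv (deriv w)) := sderiv (sderiv hw)
  cases j with
  | zero =>
    have e2 : iteratedDeriv (0+2) w = deriv (deriv w) := by
      rw [iterc (show 0+2 = 1+1 by omega) w, iteratedDeriv_succ, iteratedDeriv_one]
    have e1 : iteratedDeriv (0+1) w = deriv w := by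
      rw [iterc (show 0+1 = 1 by omega) w, iteratedDeriv_one]
    rw [e2, e1, iteratedDeriv_zero]
    simp only [Delta0]
    push_cast
    ring
  | succ i =>
    have heq : Delta0 w
        = fun x => (fun x : ℝ => (0 + 1*x) * deriv (deriv w) x) x + (5/2) * deriv w x := by
      funext t; simp only [Delta0]; ring
    have h3 := iter_comb (f := fun x : ℝ => (0 + 1*x) * deriv (deriv w) x) (g := deriv w)
      (5/2) (((contDiff_const (c := (0:ℝ))).add ((contDiff_const (c := (1:ℝ))).mul contDiff_id)).mul h2)
      (sderiv hw) (i+1)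
    have h1 := iter_linear 0 1 h2 i
    have eA : iteratedDeriv (i+1) (deriv (deriv w)) = iteratedDeriv (i+1+2) w := by
      rw [← iteratedDeriv_succ', ← iteratedDeriv_succ']
    have eB : iteratedDeriv i (deriv (deriv w)) = iteratedDeriv (i+1+1) w := by
      rw [← iteratedDeriv_succ', ← iteratedDeriv_succ']
    have eC : iteratedDeriv (i+1) (deriv w) = iteratedDeriv (i+1+1) w := by
      rw [← iteratedDeriv_succ']
    rw [eA, eB] at h1
    rw [eC] at h3
    rw [heq]
    have H3 := congrFun h3 x
    have H1 := congrFun h1 x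
    rw [H3, H1]
    push_cast
    ring

/-- Gradient bound via the fundamental theorem of calculus. -/
lemma grad_bound (N : ℝ) (hN : 4 ≤ N) {w : ℝ → ℝ} (hw : ContDiff ℝ (⊤:ℕ∞) w)
    (hs : tsupport w ⊆ Icc (1/6) (5/6)) {x : ℝ} (hx : x ∈ Icc (0:ℝ) 1) :
    |deriv w x| ≤ 6 ^ (N/2) * S (Delta1 N w) := by
  have hcont1 : Continuous (Delta1 N w) := (smooth_Delta1 N hw).continuous
  have hM0 : 0 ≤ S (Delta1 N w) := S_nonneg hcont1
  have hpow_pos : (0:ℝ) < 6 ^ (N/2) := Real.rpow_pos_of_pos (by norm_num) _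
  by_cases hx5 : 5/6 < x
  · have h0 : deriv w x = 0 := by
      refine image_eq_zero_of_notMem_tsupport fun h => ?_
      have := (hs (tsupp_deriv w h)).2
      linarith
    rw [h0, abs_zero]
    positivity
  · push_neg at hx5
    have hx0 : (0:ℝ) ≤ x := hx.1
    have key : ∀ t ∈ Set.uIcc (0:ℝ) x,
        HasDerivAt (fun t => (1-t) ^ (N/2) * deriv w t)
          ((1-t) ^ (N/2-1) * Delta1 N w t) t := by
      intro t ht
      rw [uIcc_of_le hx0] at ht
      have ht1 : (0:ℝ) < 1 - t := by
        have := ht.2; linarith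
      have h1 : HasDerivAt (fun t : ℝ => 1 - t) (-1) t := by
        simpa using (hasDerivAt_id t).const_sub 1
      have h2 : HasDerivAt (fun u : ℝ => u ^ (N/2)) ((N/2) * (1-t) ^ (N/2-1)) (1-t) :=
        Real.hasDerivAt_rpow_const (Or.inl ht1.ne')
      have h3 : HasDerivAt (fun t : ℝ => (1-t) ^ (N/2)) ((N/2) * (1-t) ^ (N/2-1) * (-1)) t :=
        HasDerivAt.comp t h2 h1
      have h4 : HasDerivAt (deriv w) (deriv (deriv w) t) t :=
        (ddiff (sderiv hw) t).hasDerivAt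
      have hmul : HasDerivAt (fun t => (1-t) ^ (N/2) * deriv w t)
          ((N/2) * (1-t) ^ (N/2-1) * (-1) * deriv w t + (1-t) ^ (N/2) * deriv (deriv w) t) t :=
        h3.mul h4
      convert hmul using 1
      have hsplit : (1-t) ^ (N/2) = (1-t) ^ (N/2-1) * (1-t) := by
        nth_rewrite 1 [show N/2 = (N/2-1) + 1 by ring]
        rw [Real.rpow_add ht1, Real.rpow_one]
      simp only [Delta1]
      rw [hsplit]
      ring
    have hInt : IntervalIntegrable (fun t => (1-t) ^ (N/2-1) * Delta1 N w t)
        MeasureTheory.volume 0 x := by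
      apply ContinuousOn.intervalIntegrable
      intro t ht
      rw [uIcc_of_le hx0] at ht
      have ht1 : (1:ℝ) - t ≠ 0 := by
        have := ht.2; intro h; have : t = 1 := by linarith
        linarith
      exact (((continuous_const.sub continuous_id).continuousAt.rpow_const
        (Or.inl ht1)).mul hcont1.continuousAt).continuousWithinAt
    have hftc := intervalIntegral.integral_eq_sub_of_hasDerivAt key hInt
    have h00 : deriv w 0 = 0 := by
      refine image_eq_zero_of_notMem_tsupport fun h => ?_
      have := (hs (tsupp_deriv w h)).1
      norm_num at this
    have hbound : ‖∫ t in (0:ℝ)..x, (1-t) ^ (N/2-1) * Delta1 N w t‖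
        ≤ S (Delta1 N w) * |x - 0| := by
      apply intervalIntegral.norm_integral_le_of_norm_le_const
      intro t ht
      rw [uIoc_of_le hx0] at ht
      have ht0 : 0 ≤ 1 - t := by have := ht.2; linarith
      have ht1 : 1 - t ≤ 1 := by have := ht.1; linarith
      have hr : (1-t) ^ (N/2-1) ≤ 1 := Real.rpow_le_one ht0 ht1 (by linarith)
      have hr0 : 0 ≤ (1-t) ^ (N/2-1) := Real.rpow_nonneg ht0 _
      have htI : t ∈ Icc (0:ℝ) 1 := ⟨le_of_lt ht.1, by linarith [ht.2]⟩
      calc ‖(1-t) ^ (N/2-1) * Delta1 N w t‖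
          = (1-t) ^ (N/2-1) * |Delta1 N w t| := by
            rw [Real.norm_eq_abs, abs_mul, abs_of_nonneg hr0]
        _ ≤ 1 * S (Delta1 N w) := by
            apply mul_le_mul hr (le_S hcont1 htI) (abs_nonneg _) zero_le_one
        _ = S (Delta1 N w) := one_mul _
    rw [hftc, h00, mul_zero, sub_zero] at hbound
    have hgx : (1-x) ^ (N/2) * |deriv w x| ≤ S (Delta1 N w) := by
      have h1x : (0:ℝ) ≤ 1 - x := by linarith
      have : |(1-x) ^ (N/2) * deriv w x| ≤ S (Delta1 N w) * |x - 0| := hbound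
      rw [abs_mul, abs_of_nonneg (Real.rpow_nonneg h1x _)] at this
      have hxabs : |x - 0| ≤ 1 := by
        rw [sub_zero, abs_of_nonneg hx0]; exact hx.2
      nlinarith
    have h16 : (1/6 : ℝ) ≤ 1 - x := by linarith
    have hA : ((1:ℝ)/6) ^ (N/2) ≤ (1-x) ^ (N/2) :=
      Real.rpow_le_rpow (by norm_num) h16 (by linarith)
    have hB : ((1:ℝ)/6) ^ (N/2) = ((6:ℝ) ^ (N/2))⁻¹ := by
      rw [one_div, ← Real.inv_rpow (by norm_num : (0:ℝ) ≤ 6)]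
    rw [hB] at hA
    calc |deriv w x| = (6 ^ (N/2) * (6 ^ (N/2))⁻¹) * |deriv w x| := by
          rw [mul_inv_cancel₀ hpow_pos.ne', one_mul]
      _ = 6 ^ (N/2) * ((6 ^ (N/2))⁻¹ * |deriv w x|) := by ring
      _ ≤ 6 ^ (N/2) * ((1-x) ^ (N/2) * |deriv w x|) := by
          apply mul_le_mul_of_nonneg_left _ hpow_pos.le
          exact mul_le_mul_of_nonneg_right hA (abs_nonneg _)
      _ ≤ 6 ^ (N/2) * S (Delta1 N w) := mul_le_mul_of_nonneg_left hgx hpow_pos.le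

/-- The sum of sup-norms of `Delta1`-iterates up to order `M`. -/
noncomputable def T (N : ℝ) (M : ℕ) (w : ℝ → ℝ) : ℝ :=
  ∑ k ∈ Finset.range (M+1), S ((Delta1 N)^[k] w)

lemma T_nonneg (N : ℝ) (M : ℕ) {w : ℝ → ℝ} (hw : ContDiff ℝ (⊤:ℕ∞) w) :
    0 ≤ T N M w :=
  Finset.sum_nonneg fun k _ => S_nonneg (smooth_iter1 N k hw).continuous

lemma T_mono (N : ℝ) {M M' : ℕ} (h : M ≤ M') {w : ℝ → ℝ} (hw : ContDiff ℝ (⊤:ℕ∞) w) :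
    T N M w ≤ T N M' w :=
  Finset.sum_le_sum_of_subset_of_nonneg (Finset.range_subset_range.mpr (by omega))
    fun k _ _ => S_nonneg (smooth_iter1 N k hw).continuous

lemma T_shift (N : ℝ) (M : ℕ) {w : ℝ → ℝ} (hw : ContDiff ℝ (⊤:ℕ∞) w) :
    T N M (Delta1 N w) ≤ T N (M+1) w := by
  have hR := Finset.sum_range_succ' (fun k => S ((Delta1 N)^[k] w)) (M+1)
  have hL : T N M (Delta1 N w) = ∑ k ∈ Finset.range (M+1), S ((Delta1 N)^[k+1] w) := by
    rw [T]
    exact Finset.sum_congr rfl fun k _ => by rw [Function.iterate_succ_apply]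
  rw [hL, T, hR]
  simp only [Function.iterate_zero, id_eq]
  have := S_nonneg hw.continuous
  linarith

lemma S_le_T (N : ℝ) (M k : ℕ) (hk : k ≤ M) {w : ℝ → ℝ} (hw : ContDiff ℝ (⊤:ℕ∞) w) :
    S ((Delta1 N)^[k] w) ≤ T N M w :=
  Finset.single_le_sum (fun k _ => S_nonneg (smooth_iter1 N k hw).continuous)
    (Finset.mem_range.mpr (by omega))

/-- Main derivative estimate: all iterated derivatives are controlled by `Delta1`-iterates. -/
lemma Rlem (N : ℝ) (hN : 4 ≤ N) (n : ℕ) :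
    ∃ C > 0, ∀ w : ℝ → ℝ, ContDiff ℝ (⊤:ℕ∞) w → tsupport w ⊆ Icc (1/6) (5/6) →
      ∀ x ∈ Icc (0:ℝ) 1, |iteratedDeriv n w x| ≤ C * T N ((n+1)/2) w := by
  induction n using Nat.strong_induction_on with
  | _ n ih =>
    match n, ih with
    | 0, _ =>
      refine ⟨1, one_pos, fun w hw hs x hx => ?_⟩
      rw [iteratedDeriv_zero, one_mul]
      exact (le_S hw.continuous hx).trans
        (by simpa using S_le_T N ((0+1)/2) 0 (by omega) hw)
    | 1, _ =>
      refine ⟨6 ^ (N/2), Real.rpow_pos_of_pos (by norm_num) _, fun w hw hs x hx => ?_⟩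
      rw [iteratedDeriv_one]
      refine (grad_bound N hN hw hs hx).trans ?_
      apply mul_le_mul_of_nonneg_left _ (Real.rpow_pos_of_pos (by norm_num) (N/2)).le
      have := S_le_T N ((1+1)/2) 1 (by omega) hw
      simpa using this
    | (j+2), ih =>
      obtain ⟨Ca, hCa0, hCa⟩ := ih j (by omega)
      obtain ⟨Cb, hCb0, hCb⟩ := ih (j+1) (by omega)
      have hNj : (0:ℝ) < N/2 + (j:ℝ) := by
        have := Nat.cast_nonneg (α := ℝ) j
        linarith
      refine ⟨6 * (Ca + (N/2 + j) * Cb), by nlinarith, fun w hw hs x hx => ?_⟩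
      have hsm1 : ContDiff ℝ (⊤:ℕ∞) (Delta1 N w) := smooth_Delta1 N hw
      by_cases hx5 : 5/6 < x
      · have h0 : iteratedDeriv (j+2) w x = 0 := by
          refine image_eq_zero_of_notMem_tsupport fun h => ?_
          have := (hs (tsupp_iterDeriv _ w h)).2
          linarith
        rw [h0, abs_zero]
        have hT := T_nonneg N ((j+2+1)/2) hw
        have hc : (0:ℝ) < 6 * (Ca + (N/2 + j) * Cb) := by nlinarith
        exact mul_nonneg hc.le hT
      · push_neg at hx5
        have hk := key_id1 N hw j x
        have hA := hCa (Delta1 N w) hsm1 ((tsupp_Delta1 N w).trans hs) x hx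
        have hA' : |iteratedDeriv j (Delta1 N w) x| ≤ Ca * T N ((j+2+1)/2) w := by
          refine hA.trans ?_
          apply mul_le_mul_of_nonneg_left _ hCa0.le
          exact (T_shift N _ hw).trans (T_mono N (by omega) hw)
        have hB := hCb w hw hs x hx
        have hB' : |iteratedDeriv (j+1) w x| ≤ Cb * T N ((j+2+1)/2) w := by
          refine hB.trans ?_
          exact mul_le_mul_of_nonneg_left (T_mono N (by omega) hw) hCb0.le
        have h16 : (1/6 : ℝ) ≤ 1 - x := by linarith
        have habs : (1-x) * |iteratedDeriv (j+2) w x|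
            ≤ |iteratedDeriv j (Delta1 N w) x| + (N/2 + j) * |iteratedDeriv (j+1) w x| := by
          have heq : |(1-x) * iteratedDeriv (j+2) w x|
              = |iteratedDeriv j (Delta1 N w) x + (N/2 + j) * iteratedDeriv (j+1) w x| := by
            rw [hk]
          rw [abs_mul, abs_of_nonneg (by linarith : (0:ℝ) ≤ 1-x)] at heq
          rw [heq]
          refine (abs_add_le _ _).trans ?_
          rw [abs_mul, abs_of_nonneg hNj.le]
        have hTnn := T_nonneg N ((j+2+1)/2) hw
        nlinarith [abs_nonneg (iteratedDeriv (j+2) w x),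
          abs_nonneg (iteratedDeriv j (Delta1 N w) x),
          abs_nonneg (iteratedDeriv (j+1) w x)]

/-- Estimate for iterated derivatives of `Delta0`-iterates. -/
lemma Blem (N : ℝ) (hN : 4 ≤ N) (m : ℕ) : ∀ n : ℕ,
    ∃ C > 0, ∀ y : ℝ → ℝ, ContDiff ℝ (⊤:ℕ∞) y → tsupport y ⊆ Icc (1/6) (5/6) →
      ∀ x ∈ Icc (0:ℝ) 1,
        |iteratedDeriv n (Delta0^[m] y) x| ≤ C * T N (m + (n+1)/2) y := by
  induction m with
  | zero =>
    intro n
    obtain ⟨C, hC, h⟩ := Rlem N hN n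
    refine ⟨C, hC, fun y hy hs x hx => ?_⟩
    have := h y hy hs x hx
    simpa using this
  | succ m ihm =>
    intro n
    obtain ⟨C2, hC2, h2⟩ := ihm (n+2)
    obtain ⟨C1, hC1, h1⟩ := ihm (n+1)
    have hn0 : (0:ℝ) < 5/2 + (n:ℝ) := by
      have := Nat.cast_nonneg (α := ℝ) n
      linarith
    refine ⟨C2 + (5/2 + n) * C1, by nlinarith, fun y hy hs x hx => ?_⟩
    have hw : ContDiff ℝ (⊤:ℕ∞) (Delta0^[m] y) := smooth_iter0 m hy
    have hrw : Delta0^[m+1] y = Delta0 (Delta0^[m] y) := Function.iterate_succ_apply' Delta0 m y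
    rw [hrw, key_id0 hw n x]
    have e2 := h2 y hy hs x hx
    have e1 := h1 y hy hs x hx
    have e2' : |iteratedDeriv (n+2) (Delta0^[m] y) x| ≤ C2 * T N (m+1 + (n+1)/2) y := by
      refine e2.trans ?_
      exact mul_le_mul_of_nonneg_left (T_mono N (by omega) hy) hC2.le
    have e1' : |iteratedDeriv (n+1) (Delta0^[m] y) x| ≤ C1 * T N (m+1 + (n+1)/2) y := by
      refine e1.trans ?_
      exact mul_le_mul_of_nonneg_left (T_mono N (by omega) hy) hC1.le
    have hxabs : |x| ≤ 1 := by
      rw [abs_of_nonneg hx.1]; exact hx.2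
    have hTnn := T_nonneg N (m+1 + (n+1)/2) hy
    calc |x * iteratedDeriv (n+2) (Delta0^[m] y) x
            + (5/2 + n) * iteratedDeriv (n+1) (Delta0^[m] y) x|
        ≤ |x| * |iteratedDeriv (n+2) (Delta0^[m] y) x|
            + (5/2 + n) * |iteratedDeriv (n+1) (Delta0^[m] y) x| := by
          refine (abs_add_le _ _).trans ?_
          rw [abs_mul, abs_mul, abs_of_nonneg hn0.le]
      _ ≤ 1 * (C2 * T N (m+1 + (n+1)/2) y)
            + (5/2 + n) * (C1 * T N (m+1 + (n+1)/2) y) := by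
          have := abs_nonneg (iteratedDeriv (n+2) (Delta0^[m] y) x)
          have := abs_nonneg (iteratedDeriv (n+1) (Delta0^[m] y) x)
          have h1le := mul_le_mul_of_nonneg_left e1' hn0.le
          nlinarith
      _ = (C2 + (5/2 + n) * C1) * T N (m+1 + (n+1)/2) y := by ring

end Prop7Aux

open Prop7Aux in
/-- **Proposition 7**: for smooth functions supported in `[1/6, 5/6]`, the sup-norm
of `Δ_[0]^m y` is controlled by the sup-norms of `Δ_[1]^k y`, `k ≤ m`. -/
theorem sup_norm_grading_comparison (N : ℝ) (hN : 4 ≤ N) (m : ℕ) :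
    ∃ C > 0, ∀ y : ℝ → ℝ, ContDiff ℝ (⊤:ℕ∞) y →
      tsupport y ⊆ Icc (1/6) (5/6) →
      (⨆ x : Icc (0:ℝ) 1, |Delta0^[m] y x|)
        ≤ C * ∑ k ∈ Finset.range (m+1), ⨆ x : Icc (0:ℝ) 1, |(Delta1 N)^[k] y x| := by
  obtain ⟨C, hC, h⟩ := Blem N hN m 0
  refine ⟨C, hC, fun y hy hs => ?_⟩
  haveI : Nonempty (Icc (0:ℝ) 1) := ⟨⟨0, by norm_num⟩⟩
  apply ciSup_le
  rintro ⟨x, hx⟩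
  have hb := h y hy hs x hx
  rw [show m + (0+1)/2 = m by omega] at hb
  rw [iteratedDeriv_zero] at hb
  simpa [T, S] using hb
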